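/- If an interval exchange map T satisfies Condition (A) (for every ε > 0 there is C_ε with ‖A(k,k+1)‖ ≤ C_ε‖A(k)‖^ε for all k ≥ 1) then the length data at the MMY acceleration times satisfy: for every ε > 0 there is C_ε such that 1/‖A(k)‖ ≤ max_α λ_α(m_k) ≤ C_ε · min_α λ_α(m_k) · ‖A(k)‖^ε for all k. -/

import Mathlib

/-! Rauzy–Veech induction for interval exchange maps: combinatorial data,
length data, the elementary Rauzy step, cocycle matrices, and acceleration times. -/

/-- Combinatorial data of an interval exchange map: two bijections ("top" and
"bottom") from the alphabet onto positions (0-indexed; position `card A - 1`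
is the last one). -/
structure IETComb (A : Type) [Fintype A] where
  pt : A ≃ Fin (Fintype.card A)
  pb : A ≃ Fin (Fintype.card A)

/-- Full data of an interval exchange map: combinatorial data plus length data. -/
structure IETData (A : Type) [Fintype A] extends IETComb A where
  lam : A → ℝ

variable {A : Type} [Fintype A] [DecidableEq A] [Nonempty A]

/-- The last position. -/
def lastIdx (A : Type) [Fintype A] [Nonempty A] : Fin (Fintype.card A) :=
  ⟨Fintype.card A - 1, Nat.sub_lt Fintype.card_pos Nat.one_pos⟩

/-- The letter in the last position of the top row. -/
def topLetter (c : IETComb A) : A := c.pt.symm (lastIdx A)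

/-- The letter in the last position of the bottom row. -/
def botLetter (c : IETComb A) : A := c.pb.symm (lastIdx A)

/-- The combinatorial Rauzy operation of top type `R_t`: the top row is unchanged and
the bottom row is rearranged so that the bottom-last letter is moved to just after the
position of the top-last letter. -/
def TopComb (c c' : IETComb A) : Prop :=
  c'.pt = c.pt ∧
  ∀ β : A, (c'.pb β : ℕ) =
    if (c.pb β : ℕ) ≤ (c.pb (topLetter c) : ℕ) then (c.pb β : ℕ)
    else if β = botLetter c then (c.pb (topLetter c) : ℕ) + 1
    else (c.pb β : ℕ) + 1

/-- The combinatorial Rauzy operation of bottom type `R_b`. -/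
def BotComb (c c' : IETComb A) : Prop :=
  c'.pb = c.pb ∧
  ∀ β : A, (c'.pt β : ℕ) =
    if (c.pt β : ℕ) ≤ (c.pt (botLetter c) : ℕ) then (c.pt β : ℕ)
    else if β = topLetter c then (c.pt (botLetter c) : ℕ) + 1
    else (c.pt β : ℕ) + 1

/-- One step of Rauzy–Veech induction, recording the winner and the loser. -/
def RVStep (D D' : IETData A) (win lose : A) : Prop :=
  (win = topLetter D.toIETComb ∧ lose = botLetter D.toIETComb ∧
    D.lam lose < D.lam win ∧ TopComb D.toIETComb D'.toIETComb ∧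
    D'.lam = Function.update D.lam win (D.lam win - D.lam lose)) ∨
  (win = botLetter D.toIETComb ∧ lose = topLetter D.toIETComb ∧
    D.lam lose < D.lam win ∧ BotComb D.toIETComb D'.toIETComb ∧
    D'.lam = Function.update D.lam win (D.lam win - D.lam lose))

/-- The elementary Rauzy matrix `B_γ = I + E_{loser, winner}` of the i-th arrow. -/
def Bmat (win lose : ℕ → A) (i : ℕ) : Matrix A A ℕ :=
  1 + Matrix.single (lose i) (win i) 1

/-- The cocycle matrix `Q(m,n) = B_{γ_{n-1}} ⋯ B_{γ_m}` along the Rauzy path. -/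
def Qmat (win lose : ℕ → A) (m n : ℕ) : Matrix A A ℕ :=
  (((List.range' m (n - m)).map (Bmat win lose)).reverse).prod

/-- The norm of a matrix: the sum of the absolute values of its entries. -/
noncomputable def matNorm (Q : Matrix A A ℕ) : ℝ := ∑ a, ∑ b, (Q a b : ℝ)

/-- `nk` is the sequence of Zorich acceleration times of the Rauzy path with winners
`win`: `n_0 = 0` and `γ(n_k, n_{k+1})` is the longest path all of whose arrows have the
same winner. -/
def ZorichTimes (win : ℕ → A) (nk : ℕ → ℕ) : Prop :=
  nk 0 = 0 ∧ StrictMono nk ∧ ∀ k : ℕ,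
    (∀ i : ℕ, nk k ≤ i → i < nk (k + 1) → win i = win (nk k)) ∧
    win (nk (k + 1)) ≠ win (nk k)

/-- `mk` is the sequence of Marmi–Moussa–Yoccoz acceleration times: `m_0 = 0` and
`m_{k+1} > m_k` is the largest integer such that not all letters are taken as winner
by the arrows in `γ(m_k, m_{k+1})`. -/
def MMYTimes (win : ℕ → A) (mk : ℕ → ℕ) : Prop :=
  mk 0 = 0 ∧ StrictMono mk ∧ ∀ k : ℕ,
    (Finset.Ico (mk k) (mk (k + 1))).image win ≠ Finset.univ ∧
    (Finset.Icc (mk k) (mk (k + 1))).image win = Finset.univ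

-- auxiliary lemmas

lemma rv_lt {D D' : IETData A} {w l : A} (h : RVStep D D' w l) : D.lam l < D.lam w := by
  rcases h with ⟨_, _, h, _⟩ | ⟨_, _, h, _⟩ <;> exact h

lemma rv_ne {D D' : IETData A} {w l : A} (h : RVStep D D' w l) : l ≠ w := by
  intro he; exact absurd (rv_lt h) (by rw [he]; exact lt_irrefl _)

lemma rv_lam {D D' : IETData A} {w l : A} (h : RVStep D D' w l) :
    D'.lam = Function.update D.lam w (D.lam w - D.lam l) := by
  rcases h with ⟨_, _, _, _, h⟩ | ⟨_, _, _, _, h⟩ <;> exact h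

lemma rv_persist {D D' D'' : IETData A} {w l w' l' : A}
    (h : RVStep D D' w l) (h' : RVStep D' D'' w' l') : w' = w ∨ l' = w := by
  rcases h with ⟨hw, -, -, ⟨hpt, -⟩, -⟩ | ⟨hw, -, -, ⟨hpb, -⟩, -⟩
  · have htop : topLetter D'.toIETComb = w := by
      rw [hw]; unfold topLetter; rw [hpt]
    rcases h' with ⟨hw', -, -, -, -⟩ | ⟨-, hl', -, -, -⟩
    · exact Or.inl (hw'.trans htop)
    · exact Or.inr (hl'.trans htop)
  · have hbot : botLetter D'.toIETComb = w := by
      rw [hw]; unfold botLetter; rw [hpb]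
    rcases h' with ⟨-, hl', -, -, -⟩ | ⟨hw', -, -, -, -⟩
    · exact Or.inr (hl'.trans hbot)
    · exact Or.inl (hw'.trans hbot)

lemma step_lam {Ds : ℕ → IETData A} {win lose : ℕ → A}
    (hRV : ∀ n : ℕ, RVStep (Ds n) (Ds (n + 1)) (win n) (lose n)) (n : ℕ) (a : A) :
    (Ds n).lam a = (Ds (n + 1)).lam a +
      (if a = win n then (Ds (n + 1)).lam (lose n) else 0) := by
  have hl := rv_lam (hRV n)
  have hne := rv_ne (hRV n)
  rw [hl]
  by_cases h : a = win n
  · subst h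
    rw [if_pos rfl, Function.update_self, Function.update_of_ne hne]
    ring
  · rw [if_neg h, Function.update_of_ne h, add_zero]

lemma lam_step_le {Ds : ℕ → IETData A} {win lose : ℕ → A}
    (hRV : ∀ n : ℕ, RVStep (Ds n) (Ds (n + 1)) (win n) (lose n))
    (hpos : ∀ n a, 0 < (Ds n).lam a) (n : ℕ) (a : A) :
    (Ds (n + 1)).lam a ≤ (Ds n).lam a := by
  rw [step_lam hRV n a]
  have : 0 ≤ (if a = win n then (Ds (n + 1)).lam (lose n) else 0) := by
    split
    · exact (hpos _ _).le
    · exact le_rfl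
  linarith

lemma lam_mono {Ds : ℕ → IETData A} {win lose : ℕ → A}
    (hRV : ∀ n : ℕ, RVStep (Ds n) (Ds (n + 1)) (win n) (lose n))
    (hpos : ∀ n a, 0 < (Ds n).lam a) {m n : ℕ} (h : m ≤ n) (a : A) :
    (Ds n).lam a ≤ (Ds m).lam a := by
  induction n, h using Nat.le_induction with
  | base => exact le_rfl
  | succ n hmn ih => exact (lam_step_le hRV hpos n a).trans ih

lemma Qmat_of_le (win lose : ℕ → A) {m n : ℕ} (h : n ≤ m) : Qmat win lose m n = 1 := by
  unfold Qmat
  rw [Nat.sub_eq_zero_of_le h]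
  simp

lemma Qmat_succ (win lose : ℕ → A) {m n : ℕ} (h : m ≤ n) :
    Qmat win lose m (n + 1) = Bmat win lose n * Qmat win lose m n := by
  unfold Qmat
  rw [show n + 1 - m = (n - m) + 1 by omega, List.range'_concat,
    show m + 1 * (n - m) = n by omega, List.map_append, List.reverse_append]
  simp

lemma Qmat_mul (win lose : ℕ → A) {m t u : ℕ} (hmt : m ≤ t) (htu : t ≤ u) :
    Qmat win lose m u = Qmat win lose t u * Qmat win lose m t := by
  unfold Qmat
  rw [show u - m = (t - m) + (u - t) by omega, ← List.range'_append,
    show m + 1 * (t - m) = t by omega, List.map_append, List.reverse_append,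
    List.prod_append]

lemma Bmul (win lose : ℕ → A) (i : ℕ) (Q : Matrix A A ℕ) (γ a : A) :
    (Bmat win lose i * Q) γ a = Q γ a + (if γ = lose i then Q (win i) a else 0) := by
  unfold Bmat
  rw [Matrix.add_mul, Matrix.one_mul, Matrix.add_apply]
  congr 1
  by_cases h : γ = lose i
  · subst h
    rw [if_pos rfl, Matrix.single_mul_apply_same, one_mul]
  · rw [if_neg h, Matrix.single_mul_apply_of_ne _ _ _ _ _ h]

lemma Qmat_entry_succ (win lose : ℕ → A) (m t : ℕ) (γ a : A) :
    Qmat win lose m t γ a ≤ Qmat win lose m (t + 1) γ a := by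
  rcases le_or_gt m t with h | h
  · rw [Qmat_succ win lose h, Bmul]
    exact Nat.le_add_right _ _
  · rw [Qmat_of_le win lose h.le, Qmat_of_le win lose h]

lemma Qmat_entry_mono (win lose : ℕ → A) (m : ℕ) {t t' : ℕ} (h : t ≤ t') (γ a : A) :
    Qmat win lose m t γ a ≤ Qmat win lose m t' γ a := by
  induction t', h using Nat.le_induction with
  | base => exact le_rfl
  | succ n hmn ih => exact ih.trans (Qmat_entry_succ win lose m n γ a)

lemma Qmat_diag (win lose : ℕ → A) (m n : ℕ) (a : A) : 1 ≤ Qmat win lose m n a a := by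
  rcases le_or_gt m n with h | h
  · have : Qmat win lose m m a a = 1 := by rw [Qmat_of_le win lose le_rfl, Matrix.one_apply_eq]
    calc 1 = Qmat win lose m m a a := this.symm
    _ ≤ Qmat win lose m n a a := Qmat_entry_mono win lose m h a a
  · rw [Qmat_of_le win lose h.le, Matrix.one_apply_eq]

lemma matNorm_nonneg (Q : Matrix A A ℕ) : 0 ≤ matNorm Q :=
  Finset.sum_nonneg fun _ _ => Finset.sum_nonneg fun _ _ => Nat.cast_nonneg _

lemma entry_le_matNorm (Q : Matrix A A ℕ) (a b : A) : (Q a b : ℝ) ≤ matNorm Q := by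
  unfold matNorm
  calc (Q a b : ℝ) ≤ ∑ c, (Q a c : ℝ) :=
        Finset.single_le_sum (f := fun c => (Q a c : ℝ))
          (fun c _ => Nat.cast_nonneg _) (Finset.mem_univ b)
  _ ≤ ∑ x, ∑ c, (Q x c : ℝ) :=
        Finset.single_le_sum (f := fun x => ∑ c, (Q x c : ℝ))
          (fun x _ => Finset.sum_nonneg fun c _ => Nat.cast_nonneg _) (Finset.mem_univ a)

lemma one_le_matNorm_Qmat (win lose : ℕ → A) (m n : ℕ) :
    1 ≤ matNorm (Qmat win lose m n) := by
  obtain ⟨a⟩ := ‹Nonempty A›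
  calc (1 : ℝ) ≤ (Qmat win lose m n a a : ℝ) := by exact_mod_cast Qmat_diag win lose m n a
  _ ≤ _ := entry_le_matNorm _ a a

lemma colsum_le_matNorm (Q : Matrix A A ℕ) (c : A) : ∑ a, (Q a c : ℝ) ≤ matNorm Q := by
  unfold matNorm
  refine Finset.sum_le_sum fun a _ => ?_
  exact Finset.single_le_sum (f := fun b => (Q a b : ℝ))
    (fun b _ => Nat.cast_nonneg _) (Finset.mem_univ c)

lemma matNorm_mul_le (P Q : Matrix A A ℕ) : matNorm (P * Q) ≤ matNorm P * matNorm Q := by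
  have expand : matNorm (P * Q) = ∑ c, (∑ a, (P a c : ℝ)) * (∑ b, (Q c b : ℝ)) := by
    unfold matNorm
    simp only [Matrix.mul_apply, Nat.cast_sum, Nat.cast_mul, Finset.sum_mul, Finset.mul_sum]
    have h1 : ∀ a : A, ∑ b : A, ∑ c : A, ((P a c : ℝ) * (Q c b : ℝ))
        = ∑ c : A, ∑ b : A, ((P a c : ℝ) * (Q c b : ℝ)) := fun a => Finset.sum_comm
    rw [Finset.sum_congr rfl (fun a _ => h1 a), Finset.sum_comm]
    exact Finset.sum_congr rfl fun c _ => Finset.sum_comm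
  rw [expand]
  calc ∑ c, (∑ a, (P a c : ℝ)) * (∑ b, (Q c b : ℝ))
      ≤ ∑ c, matNorm P * (∑ b, (Q c b : ℝ)) := by
        refine Finset.sum_le_sum fun c _ => ?_
        exact mul_le_mul_of_nonneg_right (colsum_le_matNorm P c)
          (Finset.sum_nonneg fun b _ => Nat.cast_nonneg _)
  _ = matNorm P * matNorm Q := by rw [← Finset.mul_sum]; rfl

lemma lam_cocycle {Ds : ℕ → IETData A} {win lose : ℕ → A}
    (hRV : ∀ n : ℕ, RVStep (Ds n) (Ds (n + 1)) (win n) (lose n))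
    {m n : ℕ} (h : m ≤ n) (a : A) :
    (Ds m).lam a = ∑ γ, (Qmat win lose m n γ a : ℝ) * (Ds n).lam γ := by
  induction n, h using Nat.le_induction with
  | base =>
    rw [Qmat_of_le win lose le_rfl]
    rw [Finset.sum_eq_single a]
    · rw [Matrix.one_apply_eq]; norm_num
    · intro γ _ hne
      rw [Matrix.one_apply_ne hne]; norm_num
    · intro habs; exact absurd (Finset.mem_univ a) habs
  | succ n hmn ih =>
    rw [Qmat_succ win lose hmn]
    have key : ∀ γ : A, ((Bmat win lose n * Qmat win lose m n) γ a : ℝ) * (Ds (n + 1)).lam γ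
        = (Qmat win lose m n γ a : ℝ) * (Ds (n + 1)).lam γ +
          (if γ = lose n then (Qmat win lose m n (win n) a : ℝ) * (Ds (n + 1)).lam γ else 0) := by
      intro γ
      rw [Bmul]
      push_cast
      split <;> ring
    rw [Finset.sum_congr rfl (fun γ _ => key γ), Finset.sum_add_distrib,
      Finset.sum_ite_eq' Finset.univ (lose n)
        (fun γ => (Qmat win lose m n (win n) a : ℝ) * (Ds (n + 1)).lam γ),
      if_pos (Finset.mem_univ _)]
    rw [ih]
    have key2 : ∀ γ : A, (Qmat win lose m n γ a : ℝ) * (Ds n).lam γ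
        = (Qmat win lose m n γ a : ℝ) * (Ds (n + 1)).lam γ +
          (if γ = win n then (Qmat win lose m n γ a : ℝ) * (Ds (n + 1)).lam (lose n) else 0) := by
      intro γ
      rw [step_lam hRV n γ]
      split <;> ring
    rw [Finset.sum_congr rfl (fun γ _ => key2 γ), Finset.sum_add_distrib,
      Finset.sum_ite_eq' Finset.univ (win n)
        (fun γ => (Qmat win lose m n γ a : ℝ) * (Ds (n + 1)).lam (lose n)),
      if_pos (Finset.mem_univ _)]

lemma reach_grow {win lose : ℕ → A}
    (hws : ∀ t, win (t + 1) = win t ∨ lose (t + 1) = win t)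
    (S : ℕ → Finset A) {m n p : ℕ}
    (hmono : ∀ s t, s ≤ t → S s ⊆ S t)
    (hadd : ∀ t, m ≤ t → win t ∈ S t → lose t ∈ S (t + 1))
    (hmn : m ≤ n) (hnp : n ≤ p)
    (hc1 : ∀ γ : A, ∃ t, m ≤ t ∧ t ≤ n ∧ win t = γ)
    (hc2 : ∀ γ : A, ∃ t, n ≤ t ∧ t ≤ p ∧ win t = γ)
    (hne : (S m).Nonempty) :
    Fintype.card A ≤ (S (p + 1)).card ∨ (S m).card + 1 ≤ (S (p + 1)).card := by
  by_cases hu : S (p + 1) = Finset.univ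
  · left; rw [hu, Finset.card_univ]
  right
  have hsub : S m ⊆ S (p + 1) := hmono m (p + 1) (by omega)
  suffices hss : S m ≠ S (p + 1) by
    have := Finset.card_lt_card (HasSubset.Subset.ssubset_of_ne hsub hss)
    omega
  intro heq
  have hSall : ∀ t, m ≤ t → t ≤ p + 1 → S t = S m := fun t h1 h2 =>
    Finset.Subset.antisymm (heq ▸ hmono t (p + 1) h2) (hmono m t h1)
  obtain ⟨δ, hδ⟩ : ∃ δ, δ ∉ S m := by
    by_contra hcon
    push_neg at hcon
    exact hu (heq ▸ Finset.eq_univ_iff_forall.mpr hcon)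
  obtain ⟨td, h1td, h2td, hwtd⟩ := hc1 δ
  obtain ⟨β, hβ⟩ := hne
  obtain ⟨v, h1v, h2v, hwv⟩ := hc2 β
  have hTdv : td ≤ v := le_trans h2td h1v
  set T := (Finset.Icc td v).filter (fun t => win t ∉ S m) with hT
  have htdT : td ∈ T := by
    rw [hT, Finset.mem_filter, Finset.mem_Icc]
    exact ⟨⟨le_rfl, hTdv⟩, by rw [hwtd]; exact hδ⟩
  have hTne : T.Nonempty := ⟨td, htdT⟩
  set t0 := T.max' hTne with ht0def
  have ht0 : t0 ∈ T := T.max'_mem hTne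
  rw [hT, Finset.mem_filter, Finset.mem_Icc] at ht0
  have ht0v : t0 ≤ v := ht0.1.2
  have ht0ne : t0 ≠ v := by
    intro hh
    exact ht0.2 (by rw [hh, hwv]; exact hβ)
  have hlt : t0 < v := lt_of_le_of_ne ht0v ht0ne
  have hsucc : win (t0 + 1) ∈ S m := by
    by_contra hc
    have hmem : t0 + 1 ∈ T := by
      rw [hT, Finset.mem_filter, Finset.mem_Icc]
      exact ⟨⟨by omega, by omega⟩, hc⟩
    have := T.le_max' _ hmem
    omega
  have hneq : win (t0 + 1) ≠ win t0 := by
    intro hh; exact ht0.2 (hh ▸ hsucc)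
  rcases hws t0 with h | h
  · exact hneq h
  · have hmt0 : m ≤ t0 := le_trans h1td ht0.1.1
    have hwin : win (t0 + 1) ∈ S (t0 + 1) := by
      rw [hSall (t0 + 1) (by omega) (by omega)]
      exact hsucc
    have hl := hadd (t0 + 1) (by omega) hwin
    rw [h] at hl
    exact ht0.2 (by rw [← hSall (t0 + 2) (by omega) (by omega)]; exact hl)

lemma Qmat_pos {win lose : ℕ → A}
    (hws : ∀ t, win (t + 1) = win t ∨ lose (t + 1) = win t)
    {mk : ℕ → ℕ} (hMMY : MMYTimes win mk) (k : ℕ) (γ β : A) :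
    1 ≤ Qmat win lose (mk k) (mk (k + 3 * Fintype.card A)) γ β := by
  have hmkmono : StrictMono mk := hMMY.2.1
  have hd1 : 0 < Fintype.card A := Fintype.card_pos
  set m := mk k with hm
  set S : ℕ → Finset A := fun t => Finset.univ.filter (fun x => 1 ≤ Qmat win lose m t x β)
    with hS
  have hmem : ∀ t x, x ∈ S t ↔ 1 ≤ Qmat win lose m t x β := by
    intro t x
    rw [hS, Finset.mem_filter]
    simp
  have hmono : ∀ s t, s ≤ t → S s ⊆ S t := by
    intro s t hst x hx
    rw [hmem] at hx ⊢
    exact le_trans hx (Qmat_entry_mono win lose m hst x β)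
  have hadd : ∀ t, m ≤ t → win t ∈ S t → lose t ∈ S (t + 1) := by
    intro t ht hw
    rw [hmem] at hw ⊢
    rw [Qmat_succ win lose ht, Bmul, if_pos rfl]
    omega
  have hcomplete : ∀ j (x : A), ∃ t, mk j ≤ t ∧ t ≤ mk (j + 1) ∧ win t = x := by
    intro j x
    have hx : x ∈ (Finset.Icc (mk j) (mk (j + 1))).image win := by
      rw [(hMMY.2.2 j).2]; exact Finset.mem_univ x
    obtain ⟨t, ht, hwt⟩ := Finset.mem_image.mp hx
    rw [Finset.mem_Icc] at ht
    exact ⟨t, ht.1, ht.2, hwt⟩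
  have hbase : β ∈ S m := by
    rw [hmem]
    exact Qmat_diag win lose m m β
  have grow : ∀ i : ℕ, min (Fintype.card A) (1 + i) ≤ (S (mk (k + 3 * i))).card := by
    intro i
    induction i with
    | zero =>
      have h1 : 0 < (S (mk (k + 0))).card := by
        refine Finset.card_pos.mpr ⟨β, ?_⟩
        exact hmono m _ le_rfl hbase
      exact le_trans (min_le_right _ _) h1
    | succ i ih =>
      have h1 : mk k ≤ mk (k + 3 * i) := hmkmono.monotone (by omega)
      have happ := reach_grow hws S hmono
        (fun t ht hw => hadd t (le_trans h1 ht) hw)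
        (hmkmono.monotone (show k + 3 * i ≤ k + 3 * i + 1 by omega))
        (hmkmono.monotone (show k + 3 * i + 1 ≤ k + 3 * i + 2 by omega))
        (fun x => hcomplete (k + 3 * i) x)
        (fun x => hcomplete (k + 3 * i + 1) x)
        (⟨β, hmono m _ (hmkmono.monotone (by omega)) hbase⟩)
      have hstep : S (mk (k + 3 * i + 2) + 1) ⊆ S (mk (k + 3 * (i + 1))) := by
        refine hmono _ _ ?_
        have := hmkmono (show k + 3 * i + 2 < k + 3 * (i + 1) by omega)
        omega
      have hcard := Finset.card_le_card hstep
      rcases happ with h | h <;> omega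
  have hfin := grow (Fintype.card A)
  have hcard : Fintype.card A ≤ (S (mk (k + 3 * Fintype.card A))).card := by omega
  have huniv : S (mk (k + 3 * Fintype.card A)) = Finset.univ := by
    apply Finset.eq_univ_of_card
    exact le_antisymm (Finset.card_le_univ _) hcard
  have : γ ∈ S (mk (k + 3 * Fintype.card A)) := huniv ▸ Finset.mem_univ γ
  rwa [hmem] at this

lemma sup_lam_nonneg {Ds : ℕ → IETData A} (hpos : ∀ n a, 0 < (Ds n).lam a) (n : ℕ) :
    0 ≤ ⨆ a, (Ds n).lam a := by
  obtain ⟨a⟩ := ‹Nonempty A›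
  exact le_trans (hpos n a).le
    (le_ciSup (Set.Finite.bddAbove (Set.finite_range _)) a)

lemma balance {Ds : ℕ → IETData A} {win lose : ℕ → A}
    (hRV : ∀ n : ℕ, RVStep (Ds n) (Ds (n + 1)) (win n) (lose n))
    (hpos : ∀ n a, 0 < (Ds n).lam a)
    {mk : ℕ → ℕ} (hMMY : MMYTimes win mk) (k : ℕ) :
    (⨆ a, (Ds (mk k)).lam a) ≤
      matNorm (Qmat win lose (mk k) (mk (k + 3 * Fintype.card A))) *
        (⨅ a, (Ds (mk k)).lam a) := by
  have hws : ∀ t, win (t + 1) = win t ∨ lose (t + 1) = win t :=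
    fun t => rv_persist (hRV t) (hRV (t + 1))
  set u := mk (k + 3 * Fintype.card A) with hu
  have hku : mk k ≤ u := hMMY.2.1.monotone (by omega)
  set σ := ⨆ γ, (Ds u).lam γ with hσ
  have hσ0 : 0 ≤ σ := sup_lam_nonneg hpos u
  have h1 : ∀ β, σ ≤ (Ds (mk k)).lam β := by
    intro β
    rw [lam_cocycle hRV hku β]
    have step1 : σ ≤ ∑ γ, (Ds u).lam γ :=
      ciSup_le fun γ => Finset.single_le_sum (fun x _ => (hpos u x).le) (Finset.mem_univ γ)
    refine step1.trans (Finset.sum_le_sum fun γ _ => ?_)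
    calc (Ds u).lam γ = 1 * (Ds u).lam γ := (one_mul _).symm
    _ ≤ (Qmat win lose (mk k) u γ β : ℝ) * (Ds u).lam γ := by
        refine mul_le_mul_of_nonneg_right ?_ (hpos u γ).le
        exact_mod_cast Qmat_pos hws hMMY k γ β
  have h2 : ∀ α : A, (Ds (mk k)).lam α ≤ matNorm (Qmat win lose (mk k) u) * σ := by
    intro α
    rw [lam_cocycle hRV hku α]
    calc ∑ γ, (Qmat win lose (mk k) u γ α : ℝ) * (Ds u).lam γ
        ≤ ∑ γ, (Qmat win lose (mk k) u γ α : ℝ) * σ := by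
          refine Finset.sum_le_sum fun γ _ => ?_
          exact mul_le_mul_of_nonneg_left
            (le_ciSup (Set.Finite.bddAbove (Set.finite_range _)) γ) (Nat.cast_nonneg _)
    _ = (∑ γ, (Qmat win lose (mk k) u γ α : ℝ)) * σ := (Finset.sum_mul _ _ _).symm
    _ ≤ matNorm (Qmat win lose (mk k) u) * σ :=
          mul_le_mul_of_nonneg_right (colsum_le_matNorm _ α) hσ0
  refine ciSup_le fun α => (h2 α).trans ?_
  exact mul_le_mul_of_nonneg_left (le_ciInf h1) (matNorm_nonneg _)

lemma lower_bound {Ds : ℕ → IETData A} {win lose : ℕ → A}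
    (hRV : ∀ n : ℕ, RVStep (Ds n) (Ds (n + 1)) (win n) (lose n))
    (hpos : ∀ n a, 0 < (Ds n).lam a)
    (hnorm : ∑ a, (Ds 0).lam a = 1) (n : ℕ) :
    1 / matNorm (Qmat win lose 0 n) ≤ ⨆ a, (Ds n).lam a := by
  have hN : (0 : ℝ) < matNorm (Qmat win lose 0 n) :=
    lt_of_lt_of_le one_pos (one_le_matNorm_Qmat win lose 0 n)
  rw [div_le_iff₀ hN]
  have key : (1 : ℝ) ≤ matNorm (Qmat win lose 0 n) * (⨆ a, (Ds n).lam a) := by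
    rw [← hnorm]
    have expand : ∑ a, (Ds 0).lam a
        = ∑ a, ∑ γ, (Qmat win lose 0 n γ a : ℝ) * (Ds n).lam γ :=
      Finset.sum_congr rfl fun a _ => lam_cocycle hRV (Nat.zero_le n) a
    rw [expand]
    have hb : ∀ a γ : A, (Qmat win lose 0 n γ a : ℝ) * (Ds n).lam γ
        ≤ (Qmat win lose 0 n γ a : ℝ) * (⨆ x, (Ds n).lam x) := fun a γ =>
      mul_le_mul_of_nonneg_left (le_ciSup (Set.Finite.bddAbove (Set.finite_range _)) γ)
        (Nat.cast_nonneg _)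
    calc ∑ a, ∑ γ, (Qmat win lose 0 n γ a : ℝ) * (Ds n).lam γ
        ≤ ∑ a, ∑ γ, (Qmat win lose 0 n γ a : ℝ) * (⨆ x, (Ds n).lam x) :=
          Finset.sum_le_sum fun a _ => Finset.sum_le_sum fun γ _ => hb a γ
    _ = (∑ a, ∑ γ, (Qmat win lose 0 n γ a : ℝ)) * (⨆ x, (Ds n).lam x) := by
          rw [Finset.sum_mul]
          exact Finset.sum_congr rfl fun a _ => (Finset.sum_mul _ _ _).symm
    _ = matNorm (Qmat win lose 0 n) * (⨆ x, (Ds n).lam x) := by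
          unfold matNorm
          rw [Finset.sum_comm]
  calc (1:ℝ) ≤ _ := key
  _ = (⨆ a, (Ds n).lam a) * matNorm (Qmat win lose 0 n) := mul_comm _ _

theorem conditionA_length_balance'
    (Ds : ℕ → IETData A) (win lose : ℕ → A)
    (hRV : ∀ n : ℕ, RVStep (Ds n) (Ds (n + 1)) (win n) (lose n))
    (hpos : ∀ n a, 0 < (Ds n).lam a)
    (hnorm : ∑ a, (Ds 0).lam a = 1)
    (mk : ℕ → ℕ) (hMMY : MMYTimes win mk)
    (hA : ∀ ε : ℝ, 0 < ε → ∃ C : ℝ, 0 < C ∧ ∀ k : ℕ, 1 ≤ k →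
      matNorm (Qmat win lose (mk k) (mk (k + 1))) ≤
        C * matNorm (Qmat win lose 0 (mk k)) ^ ε) :
    ∀ ε : ℝ, 0 < ε → ∃ C : ℝ, 0 < C ∧ ∀ k : ℕ,
      1 / matNorm (Qmat win lose 0 (mk k)) ≤ (⨆ a, (Ds (mk k)).lam a) ∧
      (⨆ a, (Ds (mk k)).lam a) ≤
        C * (⨅ a, (Ds (mk k)).lam a) * matNorm (Qmat win lose 0 (mk k)) ^ ε := by
  intro ε hε
  set J := 3 * Fintype.card A with hJ
  set N : ℕ → ℝ := fun k => matNorm (Qmat win lose 0 (mk k)) with hN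
  set Z : ℕ → ℝ := fun k => matNorm (Qmat win lose (mk k) (mk (k + 1))) with hZ
  have hN1 : ∀ k, 1 ≤ N k := fun k => one_le_matNorm_Qmat win lose 0 (mk k)
  have hNpos : ∀ k, (0:ℝ) < N k := fun k => lt_of_lt_of_le one_pos (hN1 k)
  have hZ1 : ∀ k, 1 ≤ Z k := fun k => one_le_matNorm_Qmat win lose _ _
  have hmk : StrictMono mk := hMMY.2.1
  have hNZ : ∀ j, N (j + 1) ≤ Z j * N j := by
    intro j
    have h := Qmat_mul win lose (Nat.zero_le (mk j)) (hmk.monotone (Nat.le_succ j))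
    rw [hN, hZ]
    simp only []
    rw [h]
    exact matNorm_mul_le _ _
  set ε' : ℝ := min (ε / 2 ^ J) 1 with hε'
  have h2Jpos : (0:ℝ) < 2 ^ J := by positivity
  have hε'pos : 0 < ε' := lt_min (div_pos hε h2Jpos) one_pos
  have hε'le1 : ε' ≤ 1 := min_le_right _ _
  have hε'2J : ε' * 2 ^ J ≤ ε := by
    calc ε' * 2 ^ J ≤ (ε / 2 ^ J) * 2 ^ J :=
          mul_le_mul_of_nonneg_right (min_le_left _ _) h2Jpos.le
    _ = ε := div_mul_cancel₀ ε (ne_of_gt h2Jpos)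
  obtain ⟨C₀, hC₀pos, hC₀⟩ := hA ε' hε'pos
  set C : ℝ := max C₀ 1 with hC
  have hC1 : 1 ≤ C := le_max_right _ _
  have hCpos : 0 < C := lt_of_lt_of_le one_pos hC1
  have hCbound : ∀ k, 1 ≤ k → Z k ≤ C * N k ^ ε' := by
    intro k hk
    refine (hC₀ k hk).trans ?_
    exact mul_le_mul_of_nonneg_right (le_max_left _ _) (Real.rpow_nonneg (hNpos k).le _)
  have h4pow : ∀ i : ℕ, 1 ≤ 4 ^ i := fun i => Nat.one_le_pow _ _ (by norm_num)
  have claimA : ∀ i k, 1 ≤ k → N (k + i) ≤ C ^ (4 ^ i) * N k ^ ((2:ℝ) ^ i) := by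
    intro i
    induction i with
    | zero =>
      intro k hk
      simp only [pow_zero, pow_one]
      rw [Real.rpow_one]
      exact le_mul_of_one_le_left (hNpos k).le hC1
    | succ i ih =>
      intro k hk
      have h3 : N (k + i + 1) ≤ C * N (k + i) ^ (ε' + 1) := by
        rw [Real.rpow_add (hNpos (k + i)) ε' 1, Real.rpow_one, ← mul_assoc]
        calc N (k + i + 1) ≤ Z (k + i) * N (k + i) := hNZ (k + i)
        _ ≤ (C * N (k + i) ^ ε') * N (k + i) :=
            mul_le_mul_of_nonneg_right (hCbound (k + i) (by omega)) (hNpos (k + i)).le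
      have h4 : N (k + i) ^ (ε' + 1) ≤ N (k + i) ^ (2:ℝ) :=
        Real.rpow_le_rpow_of_exponent_le (hN1 (k + i)) (by linarith)
      have h5 : N (k + i) ^ (2:ℝ) ≤ (C ^ (4 ^ i) * N k ^ ((2:ℝ) ^ i)) ^ (2:ℝ) :=
        Real.rpow_le_rpow (hNpos (k + i)).le (ih k hk) (by norm_num)
      have h6 : (C ^ (4 ^ i) * N k ^ ((2:ℝ) ^ i)) ^ (2:ℝ)
          = (C ^ (4 ^ i)) ^ (2:ℝ) * (N k ^ ((2:ℝ) ^ i)) ^ (2:ℝ) :=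
        Real.mul_rpow (pow_nonneg hCpos.le _) (Real.rpow_nonneg (hNpos k).le _)
      have h7 : ((C ^ (4 ^ i) : ℝ)) ^ (2:ℝ) = C ^ (4 ^ i * 2) := by
        rw [show ((2:ℝ) = ((2:ℕ):ℝ)) by norm_num, Real.rpow_natCast, ← pow_mul]
      have h8 : (N k ^ ((2:ℝ) ^ i)) ^ (2:ℝ) = N k ^ ((2:ℝ) ^ (i + 1)) := by
        rw [← Real.rpow_mul (hNpos k).le, pow_succ]
      have h9 : (C:ℝ) ^ (4 ^ i * 2 + 1) ≤ C ^ (4 ^ (i + 1)) := by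
        apply pow_le_pow_right₀ hC1
        have := h4pow i
        rw [pow_succ]
        omega
      calc N (k + (i + 1)) = N (k + i + 1) := by ring_nf
      _ ≤ C * N (k + i) ^ (ε' + 1) := h3
      _ ≤ C * N (k + i) ^ (2:ℝ) := mul_le_mul_of_nonneg_left h4 hCpos.le
      _ ≤ C * ((C ^ (4 ^ i)) ^ (2:ℝ) * (N k ^ ((2:ℝ) ^ i)) ^ (2:ℝ)) := by
            rw [← h6]; exact mul_le_mul_of_nonneg_left h5 hCpos.le
      _ = C ^ (4 ^ i * 2 + 1) * N k ^ ((2:ℝ) ^ (i + 1)) := by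
            rw [h7, h8, pow_succ]; ring
      _ ≤ C ^ (4 ^ (i + 1)) * N k ^ ((2:ℝ) ^ (i + 1)) :=
            mul_le_mul_of_nonneg_right h9 (Real.rpow_nonneg (hNpos k).le _)
  have claimZ : ∀ i k, 1 ≤ k → Z (k + i) ≤ C ^ (4 ^ i + 1) * N k ^ (ε' * (2:ℝ) ^ i) := by
    intro i k hk
    have h1 : Z (k + i) ≤ C * N (k + i) ^ ε' := hCbound (k + i) (by omega)
    have h2 : N (k + i) ^ ε' ≤ (C ^ (4 ^ i) * N k ^ ((2:ℝ) ^ i)) ^ ε' :=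
      Real.rpow_le_rpow (hNpos (k + i)).le (claimA i k hk) hε'pos.le
    have h3 : ((C ^ (4 ^ i) * N k ^ ((2:ℝ) ^ i)) : ℝ) ^ ε'
        = (C ^ (4 ^ i)) ^ ε' * (N k ^ ((2:ℝ) ^ i)) ^ ε' :=
      Real.mul_rpow (by positivity) (Real.rpow_nonneg (hNpos k).le _)
    have h4 : ((C ^ (4 ^ i) : ℝ)) ^ ε' ≤ C ^ (4 ^ i) := by
      calc ((C ^ (4 ^ i) : ℝ)) ^ ε' ≤ (C ^ (4 ^ i) : ℝ) ^ (1:ℝ) :=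
            Real.rpow_le_rpow_of_exponent_le (one_le_pow₀ hC1) hε'le1
      _ = C ^ (4 ^ i) := Real.rpow_one _
    have h5 : (N k ^ ((2:ℝ) ^ i)) ^ ε' = N k ^ (ε' * (2:ℝ) ^ i) := by
      rw [← Real.rpow_mul (hNpos k).le, mul_comm]
    calc Z (k + i) ≤ C * N (k + i) ^ ε' := h1
    _ ≤ C * ((C ^ (4 ^ i)) ^ ε' * (N k ^ ((2:ℝ) ^ i)) ^ ε') := by
          rw [← h3]; exact mul_le_mul_of_nonneg_left h2 hCpos.le
    _ ≤ C * (C ^ (4 ^ i) * N k ^ (ε' * (2:ℝ) ^ i)) := by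
          rw [h5]
          refine mul_le_mul_of_nonneg_left ?_ hCpos.le
          exact mul_le_mul_of_nonneg_right h4 (Real.rpow_nonneg (hNpos k).le _)
    _ = C ^ (4 ^ i + 1) * N k ^ (ε' * (2:ℝ) ^ i) := by rw [pow_succ]; ring
  have claimP : ∀ j k, 1 ≤ j →
      matNorm (Qmat win lose (mk k) (mk (k + j))) ≤ ∏ i ∈ Finset.range j, Z (k + i) := by
    intro j k hj
    induction j, hj using Nat.le_induction with
    | base =>
      rw [Finset.prod_range_one]
      exact le_rfl
    | succ j hj ih =>
      have hsplit := Qmat_mul win lose (hmk.monotone (show k ≤ k + j by omega))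
        (hmk.monotone (show k + j ≤ k + (j + 1) by omega))
      rw [hsplit, Finset.prod_range_succ]
      calc matNorm (Qmat win lose (mk (k + j)) (mk (k + (j + 1))) * Qmat win lose (mk k) (mk (k + j)))
          ≤ matNorm (Qmat win lose (mk (k + j)) (mk (k + (j + 1)))) *
              matNorm (Qmat win lose (mk k) (mk (k + j))) := matNorm_mul_le _ _
      _ ≤ Z (k + j) * ∏ i ∈ Finset.range j, Z (k + i) := by
            refine mul_le_mul ?_ ih (matNorm_nonneg _) ?_
            · have : k + j + 1 = k + (j + 1) := by omega
              rw [hZ]; simp only []; rw [this]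
            · exact le_trans zero_le_one (hZ1 _)
      _ = (∏ i ∈ Finset.range j, Z (k + i)) * Z (k + j) := mul_comm _ _
  have claimPB : ∀ j k, 1 ≤ k →
      (∏ i ∈ Finset.range j, Z (k + i)) ≤ C ^ (4 ^ j) * N k ^ (ε' * (2:ℝ) ^ j) := by
    intro j k hk
    induction j with
    | zero =>
      rw [Finset.prod_range_zero]
      simp only [pow_zero, pow_one]
      have h1 : (1:ℝ) ≤ N k ^ (ε' * 1) := Real.one_le_rpow (hN1 k) (by linarith)
      nlinarith
    | succ j ih =>
      rw [Finset.prod_range_succ]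
      have h1 : Z (k + j) ≤ C ^ (4 ^ j + 1) * N k ^ (ε' * (2:ℝ) ^ j) := claimZ j k hk
      have hprodnn : (0:ℝ) ≤ ∏ i ∈ Finset.range j, Z (k + i) :=
        Finset.prod_nonneg fun i _ => le_trans zero_le_one (hZ1 _)
      calc (∏ i ∈ Finset.range j, Z (k + i)) * Z (k + j)
          ≤ (C ^ (4 ^ j) * N k ^ (ε' * (2:ℝ) ^ j)) *
            (C ^ (4 ^ j + 1) * N k ^ (ε' * (2:ℝ) ^ j)) := by
            refine mul_le_mul ih h1 (le_trans zero_le_one (hZ1 _))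
              (mul_nonneg (pow_nonneg hCpos.le _) (Real.rpow_nonneg (hNpos k).le _))
      _ = (C ^ (4 ^ j) * C ^ (4 ^ j + 1)) *
            (N k ^ (ε' * (2:ℝ) ^ j) * N k ^ (ε' * (2:ℝ) ^ j)) := by ring
      _ = C ^ (4 ^ j + (4 ^ j + 1)) * N k ^ (ε' * (2:ℝ) ^ j + ε' * (2:ℝ) ^ j) := by
            rw [← pow_add, ← Real.rpow_add (hNpos k)]
      _ ≤ C ^ (4 ^ (j + 1)) * N k ^ (ε' * (2:ℝ) ^ (j + 1)) := by
            refine mul_le_mul ?_ ?_ (Real.rpow_nonneg (hNpos k).le _) (pow_nonneg hCpos.le _)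
            · apply pow_le_pow_right₀ hC1
              have := h4pow j
              rw [pow_succ]
              omega
            · apply Real.rpow_le_rpow_of_exponent_le (hN1 k)
              rw [pow_succ]
              ring_nf
              exact le_rfl
  -- final constant
  set Cfin : ℝ := max (C ^ (4 ^ J)) (matNorm (Qmat win lose (mk 0) (mk (0 + 3 * Fintype.card A))))
    with hCfin
  refine ⟨Cfin, ?_, ?_⟩
  · have : (0:ℝ) < C ^ (4 ^ J) := pow_pos hCpos _
    exact lt_of_lt_of_le this (le_max_left _ _)
  intro k
  constructor
  · exact lower_bound hRV hpos hnorm (mk k)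
  · have hbal := balance hRV hpos hMMY k
    have hinf0 : 0 ≤ ⨅ a, (Ds (mk k)).lam a := by
      obtain ⟨a⟩ := ‹Nonempty A›
      exact le_ciInf fun b => (hpos _ b).le
    have hNε1 : (1:ℝ) ≤ N k ^ ε := Real.one_le_rpow (hN1 k) hε.le
    rcases Nat.eq_zero_or_pos k with hk0 | hkpos
    · subst hk0
      have h1 : matNorm (Qmat win lose (mk 0) (mk (0 + 3 * Fintype.card A))) ≤ Cfin :=
        le_max_right _ _
      calc (⨆ a, (Ds (mk 0)).lam a)
          ≤ matNorm (Qmat win lose (mk 0) (mk (0 + 3 * Fintype.card A))) *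
            (⨅ a, (Ds (mk 0)).lam a) := hbal
      _ ≤ Cfin * (⨅ a, (Ds (mk 0)).lam a) := mul_le_mul_of_nonneg_right h1 hinf0
      _ = Cfin * (⨅ a, (Ds (mk 0)).lam a) * 1 := (mul_one _).symm
      _ ≤ Cfin * (⨅ a, (Ds (mk 0)).lam a) * N 0 ^ ε := by
            refine mul_le_mul_of_nonneg_left hNε1 ?_
            refine mul_nonneg ?_ hinf0
            exact le_trans (pow_nonneg hCpos.le _) (le_max_left _ _)
    · have hk1 : 1 ≤ k := hkpos
      have hQb : matNorm (Qmat win lose (mk k) (mk (k + 3 * Fintype.card A)))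
          ≤ C ^ (4 ^ J) * N k ^ ε := by
        have hP := claimP J k (by
          have := Fintype.card_pos (α := A)
          omega)
        have hPB := claimPB J k hk1
        have hexp : N k ^ (ε' * (2:ℝ) ^ J) ≤ N k ^ ε := by
          apply Real.rpow_le_rpow_of_exponent_le (hN1 k)
          exact hε'2J
        calc matNorm (Qmat win lose (mk k) (mk (k + 3 * Fintype.card A)))
            = matNorm (Qmat win lose (mk k) (mk (k + J))) := by rw [hJ]
        _ ≤ ∏ i ∈ Finset.range J, Z (k + i) := hP
        _ ≤ C ^ (4 ^ J) * N k ^ (ε' * (2:ℝ) ^ J) := hPB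
        _ ≤ C ^ (4 ^ J) * N k ^ ε := mul_le_mul_of_nonneg_left hexp (pow_nonneg hCpos.le _)
      calc (⨆ a, (Ds (mk k)).lam a)
          ≤ matNorm (Qmat win lose (mk k) (mk (k + 3 * Fintype.card A))) *
            (⨅ a, (Ds (mk k)).lam a) := hbal
      _ ≤ (C ^ (4 ^ J) * N k ^ ε) * (⨅ a, (Ds (mk k)).lam a) :=
            mul_le_mul_of_nonneg_right hQb hinf0
      _ = C ^ (4 ^ J) * (⨅ a, (Ds (mk k)).lam a) * N k ^ ε := by ring
      _ ≤ Cfin * (⨅ a, (Ds (mk k)).lam a) * N k ^ ε := by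
            refine mul_le_mul_of_nonneg_right ?_ (Real.rpow_nonneg (hNpos k).le _)
            exact mul_le_mul_of_nonneg_right (le_max_left _ _) hinf0

/-- if an interval exchange map (normalized to total length 1) satisfies
Condition (A) (for every ε > 0 there is C_ε with ‖A(k,k+1)‖ ≤ C_ε ‖A(k)‖^ε for all
k ≥ 1, where A(k) = Q(0, m_k) is the MMY cocycle), then for every ε > 0 there is C_ε
such that 1/‖A(k)‖ ≤ max_α λ_α(m_k) ≤ C_ε · min_α λ_α(m_k) · ‖A(k)‖^ε for all k. -/
theorem conditionA_length_balance
    (Ds : ℕ → IETData A) (win lose : ℕ → A)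
    (hRV : ∀ n : ℕ, RVStep (Ds n) (Ds (n + 1)) (win n) (lose n))
    (hpos : ∀ n a, 0 < (Ds n).lam a)
    (hnorm : ∑ a, (Ds 0).lam a = 1)
    (mk : ℕ → ℕ) (hMMY : MMYTimes win mk)
    (hA : ∀ ε : ℝ, 0 < ε → ∃ C : ℝ, 0 < C ∧ ∀ k : ℕ, 1 ≤ k →
      matNorm (Qmat win lose (mk k) (mk (k + 1))) ≤
        C * matNorm (Qmat win lose 0 (mk k)) ^ ε) :
    ∀ ε : ℝ, 0 < ε → ∃ C : ℝ, 0 < C ∧ ∀ k : ℕ,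
      1 / matNorm (Qmat win lose 0 (mk k)) ≤ (⨆ a, (Ds (mk k)).lam a) ∧
      (⨆ a, (Ds (mk k)).lam a) ≤
        C * (⨅ a, (Ds (mk k)).lam a) * matNorm (Qmat win lose 0 (mk k)) ^ ε := by
  exact conditionA_length_balance' Ds win lose hRV hpos hnorm mk hMMY hA
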